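/- Let P be a probability measure on a measurable space X, and let h ∈ L⁴(P) with E_{X~P}[h(X)] = 0 and E_{X~P}[h(X)²] > 0. Set H := √(E_{X~P}[h(X)⁴]) / E_{X~P}[h(X)²] and ‖h‖ := √(E_{X~P}[h(X)²]), and define h̃(x) := h(x) if |h(x)| ≤ 2H‖h‖ and h̃(x) := sign(h(x))·‖h‖ otherwise. For n ∈ ℕ with n ≥ 16 H² and s := 1/(4‖h‖√n), the following hold: E_{X~P}[ h(X) exp(s h̃(X)) ] ≥ ‖h‖/(16√n), and consequently E_{X~P}[ h(X) exp(s h̃(X)) ] / E_{X~P}[ exp(s h̃(X)) ] ≥ ‖h‖/(24√n). -/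

import Mathlib

open MeasureTheory ProbabilityTheory Real
open scoped ENNReal

noncomputable section

private lemma exp_le_quad' {u : ℝ} (hu : u ≤ 0) : Real.exp u ≤ 1 + u + u^2 := by
  have h1 := Real.add_one_le_exp (-u)
  have h2 : Real.exp u * Real.exp (-u) = 1 := by rw [← Real.exp_add]; simp
  nlinarith [Real.exp_pos u, Real.exp_pos (-u)]

private lemma key_pointwise' {s t : ℝ} (hs : 0 < s) (hb : s * |t| ≤ 1/4) :
    3/4 * s * t^2 ≤ t * (Real.exp (s*t) - 1) := by
  rcases le_or_gt 0 t with ht | ht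
  · have h1 := Real.add_one_le_exp (s*t)
    nlinarith [mul_nonneg hs.le ht]
  · have hu : s * t ≤ 0 := by nlinarith
    have h1 := exp_le_quad' hu
    have habs : |t| = -t := abs_of_neg ht
    rw [habs] at hb
    nlinarith [sq_nonneg t, mul_pos hs hs, mul_nonneg hs.le (sq_nonneg t)]

set_option maxHeartbeats 1000000 in
/-- lower bound on the tilted first moment of a centered function with
bounded (2,4)-moment ratio (the key separation estimate in the proof of Lemma 3). -/
theorem tilted_mean_lower_bound
    {X : Type*} [MeasurableSpace X] (P : Measure X) [IsProbabilityMeasure P]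
    (h : X → ℝ) (hh_meas : Measurable h) (hh_L4 : MemLp h 4 P)
    (hcenter : ∫ x, h x ∂P = 0)
    (hpos : 0 < ∫ x, (h x) ^ 2 ∂P)
    -- the (2,4)-moment ratio H and the L²-norm ‖h‖
    (H nh : ℝ)
    (hH : H = Real.sqrt (∫ x, (h x) ^ 4 ∂P) / ∫ x, (h x) ^ 2 ∂P)
    (hnh : nh = Real.sqrt (∫ x, (h x) ^ 2 ∂P))
    -- the truncation h̃ of h
    (htil : X → ℝ)
    (hhtil : ∀ x, htil x = if |h x| ≤ 2 * H * nh then h x else Real.sign (h x) * nh)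
    (n : ℕ) (hn : 16 * H ^ 2 ≤ (n : ℝ))
    (s : ℝ) (hs : s = 1 / (4 * nh * Real.sqrt n)) :
    nh / (16 * Real.sqrt n) ≤ ∫ x, h x * Real.exp (s * htil x) ∂P
      ∧ nh / (24 * Real.sqrt n)
        ≤ (∫ x, h x * Real.exp (s * htil x) ∂P) / ∫ x, Real.exp (s * htil x) ∂P := by
  set m2 : ℝ := ∫ x, (h x) ^ 2 ∂P with hm2def
  set m4 : ℝ := ∫ x, (h x) ^ 4 ∂P with hm4def
  have m2pos : (0:ℝ) < m2 := hpos
  have i1 : Integrable h P := hh_L4.integrable (by norm_num)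
  have i2 : Integrable (fun x => (h x)^2) P :=
    (hh_L4.mono_exponent (by norm_num)).integrable_sq
  have i4 : Integrable (fun x => (h x)^4) P := by
    have := hh_L4.integrable_norm_rpow (by norm_num) (by norm_num)
    refine this.congr (Filter.Eventually.of_forall fun x => ?_)
    simp only [Real.norm_eq_abs]
    rw [show ((4:ℝ≥0∞).toReal) = ((4:ℕ):ℝ) by norm_num, Real.rpow_natCast, pow_abs,
      abs_of_nonneg (by positivity)]
  have m4nn : 0 ≤ m4 := integral_nonneg fun x => by positivity
  have hnh0 : 0 < nh := by rw [hnh]; exact Real.sqrt_pos.mpr m2pos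
  have hnhsq : nh^2 = m2 := by rw [hnh]; exact Real.sq_sqrt m2pos.le
  -- m4 ≥ m2^2 (Cauchy–Schwarz / nonnegative variance of h²)
  have hvar : m2^2 ≤ m4 := by
    have h0 : 0 ≤ ∫ x, ((h x)^2 - m2)^2 ∂P := integral_nonneg fun x => sq_nonneg _
    have hexpand : ∫ x, ((h x)^2 - m2)^2 ∂P = m4 - 2*m2*m2 + m2^2 := by
      have heq : (fun x => ((h x)^2 - m2)^2) =
          fun x => (h x)^4 - (2*m2)*(h x)^2 + m2^2 := by funext x; ring
      have iA : Integrable (fun x => (h x)^4 - (2*m2)*(h x)^2) P :=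
        i4.sub (i2.const_mul (2*m2))
      rw [heq, integral_add iA (integrable_const _),
        integral_sub i4 (i2.const_mul (2*m2)), integral_const_mul, integral_const]
      simp only [measure_univ, probReal_univ, ENNReal.toReal_one, smul_eq_mul, one_mul, ← hm2def, ← hm4def]
    nlinarith [h0, hexpand]
  have hH1 : 1 ≤ H := by
    rw [hH, le_div_iff₀ m2pos]
    have : m2 ≤ Real.sqrt m4 := by
      have := Real.sqrt_le_sqrt hvar
      rwa [Real.sqrt_sq m2pos.le] at this
    linarith
  have hHpos : 0 < H := lt_of_lt_of_le one_pos hH1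
  have hsqrtm4 : Real.sqrt m4 = H * m2 := by
    rw [hH]; field_simp
  have hm4eq : m4 = H^2 * m2^2 := by
    have h1 := Real.sq_sqrt m4nn
    rw [hsqrtm4] at h1
    nlinarith [h1]
  have hn1 : (16:ℝ) ≤ (n:ℝ) := by nlinarith
  have hsn : (4:ℝ) ≤ Real.sqrt n := by
    have h1 : Real.sqrt 16 ≤ Real.sqrt n := Real.sqrt_le_sqrt hn1
    rwa [show (16:ℝ) = 4^2 by norm_num, Real.sqrt_sq (by norm_num)] at h1
  have hsnpos : 0 < Real.sqrt n := lt_of_lt_of_le (by norm_num) hsn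
  have hsnH : 4*H ≤ Real.sqrt n := by
    have h1 : Real.sqrt (16*H^2) ≤ Real.sqrt n := Real.sqrt_le_sqrt hn
    rwa [show (16:ℝ)*H^2 = (4*H)^2 by ring, Real.sqrt_sq (by positivity)] at h1
  have hs0 : 0 < s := by rw [hs]; positivity
  have hsbound : s * (2*H*nh) ≤ 1/4 := by
    rw [hs, div_mul_eq_mul_div, div_le_div_iff₀ (by positivity) (by norm_num)]
    nlinarith [mul_le_mul_of_nonneg_left hsnH hnh0.le, mul_nonneg hnh0.le hsnpos.le]
  have htilbdd : ∀ x, |htil x| ≤ 2*H*nh := by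
    intro x; rw [hhtil x]; split_ifs with hx
    · exact hx
    · rw [abs_mul, abs_of_pos hnh0]
      have hsgn : |Real.sign (h x)| ≤ 1 := by
        rcases Real.sign_apply_eq (h x) with h'|h'|h' <;> rw [h'] <;> norm_num
      nlinarith [hH1, hnh0]
  have hsht : ∀ x, |s * htil x| ≤ 1/4 := by
    intro x
    rw [abs_mul, abs_of_pos hs0]
    calc s * |htil x| ≤ s*(2*H*nh) := by nlinarith [htilbdd x, hs0]
    _ ≤ 1/4 := hsbound
  have hexp_le : ∀ x, Real.exp (s * htil x) ≤ 3/2 := by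
    intro x
    have h1 : s * htil x ≤ 1/4 := le_trans (le_abs_self _) (hsht x)
    have h2 := Real.add_one_le_exp (-(s*htil x))
    have h3 : Real.exp (s*htil x) * Real.exp (-(s*htil x)) = 1 := by
      rw [← Real.exp_add]; simp
    nlinarith [Real.exp_pos (s*htil x), Real.exp_pos (-(s*htil x))]
  have hexp_ge : ∀ x, (1:ℝ)/2 ≤ Real.exp (s * htil x) := by
    intro x
    have h1 : -(1/4:ℝ) ≤ s * htil x := by
      have := (abs_le.mp (hsht x)).1; linarith
    nlinarith [Real.add_one_le_exp (s*htil x)]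
  have hmtil : Measurable htil := by
    have heq : htil = fun x => if |h x| ≤ 2*H*nh then h x else Real.sign (h x) * nh :=
      funext hhtil
    rw [heq]
    refine Measurable.ite (measurableSet_le hh_meas.abs measurable_const) hh_meas
      (Measurable.mul ?_ measurable_const)
    have heq2 : (fun x => Real.sign (h x)) =
        fun x => if h x < 0 then (-1:ℝ) else if 0 < h x then 1 else 0 := by
      funext x; rw [Real.sign]
    rw [heq2]
    exact Measurable.ite (measurableSet_lt hh_meas measurable_const)
      measurable_const (Measurable.ite (measurableSet_lt measurable_const hh_meas)
        measurable_const measurable_const)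
  have hmexp : Measurable (fun x => Real.exp (s * htil x)) :=
    Real.measurable_exp.comp (measurable_const.mul hmtil)
  have iE : Integrable (fun x => Real.exp (s * htil x)) P := by
    refine Integrable.mono' (integrable_const (3/2:ℝ)) hmexp.aestronglyMeasurable
      (Filter.Eventually.of_forall fun x => ?_)
    rw [Real.norm_eq_abs, abs_of_pos (Real.exp_pos _)]
    exact hexp_le x
  have iHE : Integrable (fun x => h x * Real.exp (s * htil x)) P := by
    have := i1.bdd_mul hmexp.aestronglyMeasurable
      (c := 3/2) (Filter.Eventually.of_forall fun x => by
        rw [Real.norm_eq_abs, abs_of_pos (Real.exp_pos _)]; exact hexp_le x)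
    simpa [mul_comm] using this
  have iB : Integrable (fun x => if |h x| ≤ 2*H*nh then (h x)^2 else 0) P := by
    refine Integrable.mono' i2 ?_ (Filter.Eventually.of_forall fun x => ?_)
    · exact (Measurable.ite (measurableSet_le hh_meas.abs measurable_const)
        (hh_meas.pow_const 2) measurable_const).aestronglyMeasurable
    · rw [Real.norm_eq_abs]; split_ifs with hx
      · rw [abs_of_nonneg (sq_nonneg _)]
      · simpa using sq_nonneg (h x)
  have iC : Integrable (fun x => if |h x| ≤ 2*H*nh then 0 else (h x)^2) P := by
    refine Integrable.mono' i2 ?_ (Filter.Eventually.of_forall fun x => ?_)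
    · exact (Measurable.ite (measurableSet_le hh_meas.abs measurable_const)
        measurable_const (hh_meas.pow_const 2)).aestronglyMeasurable
    · rw [Real.norm_eq_abs]; split_ifs with hx
      · simpa using sq_nonneg (h x)
      · rw [abs_of_nonneg (sq_nonneg _)]
  have hBC : (∫ x, (if |h x| ≤ 2*H*nh then (h x)^2 else 0) ∂P)
      + (∫ x, (if |h x| ≤ 2*H*nh then 0 else (h x)^2) ∂P) = m2 := by
    rw [← integral_add iB iC, hm2def]
    refine integral_congr_ae (Filter.Eventually.of_forall fun x => ?_)
    by_cases hx : |h x| ≤ 2*H*nh <;> simp [hx]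
  have hC : (∫ x, (if |h x| ≤ 2*H*nh then 0 else (h x)^2) ∂P) ≤ m2/4 := by
    have hden : (0:ℝ) < 4*H^2*m2 := by positivity
    have hpt : ∀ x, (if |h x| ≤ 2*H*nh then (0:ℝ) else (h x)^2) ≤ (h x)^4 / (4*H^2*m2) := by
      intro x
      split_ifs with hx
      · positivity
      · rw [le_div_iff₀ hden]
        push_neg at hx
        have h2 : 2*H*nh ≤ |h x| := hx.le
        have h3 : (2*H*nh)^2 ≤ (h x)^2 := by
          have hm := mul_self_le_mul_self (by positivity : (0:ℝ) ≤ 2*H*nh) h2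
          nlinarith [sq_abs (h x)]
        have h4 : 4*H^2*m2 ≤ (h x)^2 := by
          have he : (2*H*nh)^2 = 4*H^2*m2 := by rw [← hnhsq]; ring
          linarith [he ▸ h3]
        have h5 := mul_le_mul_of_nonneg_left h4 (sq_nonneg (h x))
        nlinarith [h5]
    calc (∫ x, (if |h x| ≤ 2*H*nh then (0:ℝ) else (h x)^2) ∂P)
        ≤ ∫ x, (h x)^4 / (4*H^2*m2) ∂P :=
          integral_mono iC (i4.div_const _) hpt
    _ = m4 / (4*H^2*m2) := by rw [integral_div]
    _ = m2/4 := by rw [hm4eq]; field_simp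
  have hB : 3/4*m2 ≤ ∫ x, (if |h x| ≤ 2*H*nh then (h x)^2 else 0) ∂P := by linarith
  have hgle : ∀ x, (if |h x| ≤ 2*H*nh then 3/4*s*(h x)^2 else 0)
      ≤ h x * (Real.exp (s * htil x) - 1) := by
    intro x
    rw [hhtil x]
    split_ifs with hx
    · refine key_pointwise' hs0 ?_
      calc s*|h x| ≤ s*(2*H*nh) := by nlinarith [hs0]
      _ ≤ 1/4 := hsbound
    · push_neg at hx
      have hne : h x ≠ 0 := by
        intro h0; rw [h0] at hx; simp at hx; nlinarith [hHpos, hnh0]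
      rcases hne.lt_or_gt with hneg | hpos'
      · rw [Real.sign_of_neg hneg]
        have hle1 : Real.exp (s * (-1*nh)) ≤ 1 :=
          Real.exp_le_one_iff.mpr (by nlinarith)
        nlinarith [hle1, hneg]
      · rw [Real.sign_of_pos hpos']
        have hge1 : 1 ≤ Real.exp (s * (1*nh)) :=
          Real.one_le_exp (by nlinarith)
        nlinarith [hge1, hpos']
  have iG : Integrable (fun x => if |h x| ≤ 2*H*nh then 3/4*s*(h x)^2 else 0) P := by
    have heq : (fun x => if |h x| ≤ 2*H*nh then 3/4*s*(h x)^2 else 0)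
        = fun x => (3/4*s) * (if |h x| ≤ 2*H*nh then (h x)^2 else 0) := by
      funext x; split_ifs <;> ring
    rw [heq]; exact iB.const_mul _
  have iHE1 : Integrable (fun x => h x * (Real.exp (s*htil x) - 1)) P := by
    refine (iHE.sub i1).congr (Filter.Eventually.of_forall fun x => ?_)
    simp only [Pi.sub_apply]; ring
  have hmain : ∫ x, (if |h x| ≤ 2*H*nh then 3/4*s*(h x)^2 else 0) ∂P
      ≤ ∫ x, h x * (Real.exp (s*htil x) - 1) ∂P :=
    integral_mono iG iHE1 hgle
  have hint_eq : ∫ x, h x * (Real.exp (s*htil x) - 1) ∂P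
      = ∫ x, h x * Real.exp (s*htil x) ∂P := by
    have heq : (fun x => h x * (Real.exp (s*htil x) - 1))
        = fun x => h x * Real.exp (s*htil x) - h x := by funext x; ring
    rw [heq, integral_sub iHE i1, hcenter, sub_zero]
  have hgint : ∫ x, (if |h x| ≤ 2*H*nh then 3/4*s*(h x)^2 else 0) ∂P
      = (3/4*s) * ∫ x, (if |h x| ≤ 2*H*nh then (h x)^2 else 0) ∂P := by
    rw [← integral_const_mul]
    refine integral_congr_ae (Filter.Eventually.of_forall fun x => ?_)
    by_cases hx : |h x| ≤ 2*H*nh <;> simp [hx]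
  have hsm2 : s * m2 = nh / (4 * Real.sqrt n) := by
    rw [hs, ← hnhsq]; field_simp
  have hfirst : nh / (16 * Real.sqrt n) ≤ ∫ x, h x * Real.exp (s * htil x) ∂P := by
    rw [← hint_eq]
    refine le_trans ?_ hmain
    rw [hgint]
    have hstep : (3/4*s) * (3/4*m2)
        ≤ (3/4*s) * ∫ x, (if |h x| ≤ 2*H*nh then (h x)^2 else 0) ∂P :=
      mul_le_mul_of_nonneg_left hB (by positivity)
    refine le_trans ?_ hstep
    have heq9 : (3/4*s) * (3/4*m2) = 9/16 * (s*m2) := by ring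
    rw [heq9, hsm2, show (9:ℝ)/16 * (nh/(4*Real.sqrt n)) = 9*nh/(64*Real.sqrt n) by ring,
      div_le_div_iff₀ (by positivity) (by positivity)]
    nlinarith [mul_nonneg hnh0.le hsnpos.le]
  refine ⟨hfirst, ?_⟩
  have hD_le : (∫ x, Real.exp (s * htil x) ∂P) ≤ 3/2 := by
    calc (∫ x, Real.exp (s * htil x) ∂P) ≤ ∫ _x, (3/2:ℝ) ∂P :=
        integral_mono iE (integrable_const _) hexp_le
    _ = 3/2 := by simp
  have hD_pos : 0 < ∫ x, Real.exp (s * htil x) ∂P := by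
    have hhalf : (1/2:ℝ) ≤ ∫ x, Real.exp (s * htil x) ∂P := by
      have := integral_mono (integrable_const (1/2:ℝ)) iE hexp_ge
      simpa using this
    linarith
  rw [le_div_iff₀ hD_pos]
  have hsnne : Real.sqrt n ≠ 0 := hsnpos.ne'
  calc nh/(24*Real.sqrt n) * (∫ x, Real.exp (s * htil x) ∂P)
      ≤ nh/(24*Real.sqrt n) * (3/2) :=
        mul_le_mul_of_nonneg_left hD_le (by positivity)
  _ = nh/(16*Real.sqrt n) := by field_simp; ring
  _ ≤ _ := hfirst
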